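/- Let K, D, λ, m be positive integers with λ dividing D, D dividing K − λ, and n := (K − λ)/D > 1. Consider the index coding problem with mK messages where, writing each k ∈ ZMod (mK) with representative whose residue modulo K has representative k̄ ∈ {1, …, K}: if k̄ ≤ K − D − λ then A'_k = {k + iK : 1 ≤ i ≤ m−1} ∪ {k + D + iK : 0 ≤ i ≤ m−1}, and if K − D − λ < k̄ ≤ K then A'_k = {k + iK : 1 ≤ i ≤ m−1} ∪ {k + jλ + iK : 1 ≤ j ≤ D/λ, 0 ≤ i ≤ m−1}. Then the set C^(m) = { e'_{i+(j−1)D} + e'_{i+jD} : 1 ≤ i ≤ D, 1 ≤ j ≤ n−1 } ∪ { Σ_{t=0}^{D/λ} e'_{K−λ+r−tλ} : 1 ≤ r ≤ λ }, where e'_l = Σ_{t=0}^{m−1} e_{l+tK} ∈ V_{mK}, is a valid scalar linear index code of length K − D for this problem, and moreover every valid scalar linear index code for this problem has length at least K − D. -/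
import Mathlib


/-- Standard basis vector `e_j` of `V_n = ZMod n → GF(2)`. -/
def stdVec (n : ℕ) (j : ZMod n) : ZMod n → ZMod 2 := fun i => if i = j then 1 else 0

/-- `C` is a valid scalar linear index code over `GF(2)` for the index coding problem
with `n` messages and antidote pattern `A`. -/
def IsIndexCode (n : ℕ) (A : ZMod n → Set (ZMod n)) (C : Set (ZMod n → ZMod 2)) : Prop :=
  C.Finite ∧ ∀ k : ZMod n,
    stdVec n k ∈ Submodule.span (ZMod 2) (C ∪ (stdVec n '' A k))

/-- `e'_l = Σ_{t=0}^{m-1} e_{l+tK} ∈ V_{mK}`. -/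
def eSum (K m : ℕ) (l : ℕ) : ZMod (m * K) → ZMod 2 :=
  ∑ t ∈ Finset.range m, stdVec (m * K) ((l + t * K : ℕ))

/-- The representative in `{1, …, K}` of the residue modulo `K` of `k ∈ ZMod n`. -/
def resIdx (n K : ℕ) (k : ZMod n) : ℕ := if k.val % K = 0 then K else k.val % K

/-- Lifted antidote pattern of Class (ii): for `k` with residue index `k̄ ≤ K - D - λ`
the antidotes are `{k+iK : 1 ≤ i ≤ m-1} ∪ {k+D+iK : 0 ≤ i ≤ m-1}`; otherwise they are
`{k+iK : 1 ≤ i ≤ m-1} ∪ {k+jλ+iK : 1 ≤ j ≤ D/λ, 0 ≤ i ≤ m-1}`. -/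
def classiiA (K D lam m : ℕ) (k : ZMod (m * K)) : Set (ZMod (m * K)) :=
  if resIdx (m * K) K k ≤ K - D - lam then
    {x | ∃ i : ℕ, 1 ≤ i ∧ i ≤ m - 1 ∧ x = k + (i * K : ℕ)} ∪
    {x | ∃ i : ℕ, i ≤ m - 1 ∧ x = k + (D + i * K : ℕ)}
  else
    {x | ∃ i : ℕ, 1 ≤ i ∧ i ≤ m - 1 ∧ x = k + (i * K : ℕ)} ∪
    {x | ∃ j i : ℕ, 1 ≤ j ∧ j ≤ D / lam ∧ i ≤ m - 1 ∧ x = k + (j * lam + i * K : ℕ)}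

/-- The lifted code of Class (ii) (Corollary 5), with `n = (K - λ)/D`. -/
def codeClassii (K D lam m : ℕ) : Set (ZMod (m * K) → ZMod 2) :=
  {v | ∃ i j : ℕ, 1 ≤ i ∧ i ≤ D ∧ 1 ≤ j ∧ j ≤ (K - lam) / D - 1 ∧
    v = eSum K m (i + (j - 1) * D) + eSum K m (i + j * D)} ∪
  {v | ∃ r : ℕ, 1 ≤ r ∧ r ≤ lam ∧
    v = ∑ t ∈ Finset.range (D / lam + 1), eSum K m (K - lam + r - t * lam)}

lemma eSum_add_K (K m l : ℕ) : eSum K m (l + K) = eSum K m l := by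
  unfold eSum
  have h1 : ∀ t : ℕ, ((l + K + t * K : ℕ) : ZMod (m*K)) = ((l + (t+1) * K : ℕ) : ZMod (m*K)) := by
    intro t; congr 1; ring
  have h2 : ((l + m * K : ℕ) : ZMod (m*K)) = ((l + 0 * K : ℕ) : ZMod (m*K)) := by
    rw [show l + 0 * K = l by ring, Nat.cast_add, ZMod.natCast_self, add_zero]
  calc ∑ t ∈ Finset.range m, stdVec (m*K) ((l + K + t * K : ℕ))
      = ∑ t ∈ Finset.range m, stdVec (m*K) ((l + (t+1) * K : ℕ)) := by
        exact Finset.sum_congr rfl fun t _ => by rw [h1]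
    _ = ∑ t ∈ Finset.range (m+1), stdVec (m*K) ((l + t * K : ℕ))
        - stdVec (m*K) ((l + 0 * K : ℕ)) := by
        rw [Finset.sum_range_succ']; abel
    _ = ∑ t ∈ Finset.range m, stdVec (m*K) ((l + t * K : ℕ)) := by
        rw [Finset.sum_range_succ, h2]; abel

lemma eSum_mod (K m a : ℕ) : eSum K m a = eSum K m (a % K) := by
  have key : ∀ j b, eSum K m (b + j * K) = eSum K m b := by
    intro j
    induction j with
    | zero => simp
    | succ j ih => intro b
                   have : b + (j+1) * K = (b + j * K) + K := by ring
                   rw [this, eSum_add_K, ih]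
  conv_lhs => rw [← Nat.mod_add_div' a K]
  exact key _ _

lemma eSum_eq_of_mod (K m a b : ℕ) (h : a % K = b % K) : eSum K m a = eSum K m b := by
  rw [eSum_mod, h, ← eSum_mod]

lemma eSum_val_add (K m : ℕ) [NeZero (m*K)] (k : ZMod (m*K)) (c : ℕ) :
    eSum K m (k.val + c) = ∑ i ∈ Finset.range m, stdVec (m*K) (k + ((c + i * K : ℕ) : ZMod (m*K))) := by
  unfold eSum
  refine Finset.sum_congr rfl fun i _ => ?_
  congr 1
  push_cast
  rw [ZMod.natCast_val, ZMod.cast_id]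
  ring

lemma resIdx_mod (N K : ℕ) (k : ZMod N) : resIdx N K k % K = k.val % K := by
  unfold resIdx
  split
  · next h => simp [h, Nat.mod_self]
  · exact Nat.mod_mod_of_dvd _ dvd_rfl

lemma resIdx_pos (N K : ℕ) (hK : 0 < K) (k : ZMod N) : 1 ≤ resIdx N K k := by
  unfold resIdx; split
  · omega
  · next h => omega

lemma resIdx_le (N K : ℕ) (hK : 0 < K) (k : ZMod N) : resIdx N K k ≤ K := by
  unfold resIdx; split
  · omega
  · have := Nat.mod_lt k.val hK; omega

lemma self_add_self (N : ℕ) (v : ZMod N → ZMod 2) : v + v = 0 := by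
  funext x
  have h : ∀ a : ZMod 2, a + a = 0 := by decide
  exact h (v x)

lemma char2_trick (N : ℕ) (a b c : ZMod N → ZMod 2) : (a + b) + (b + c) = a + c := by
  have h := self_add_self N b
  calc (a + b) + (b + c) = a + (b + b) + c := by abel
    _ = a + c := by rw [h, add_zero]

section core
variable (K D lam m n q : ℕ) (hK : 0 < K) (hD : 0 < D) (hlam : 0 < lam) (hm : 0 < m)
  (hq : D = q * lam) (hKn : K = D * n + lam) (hn2 : 2 ≤ n) (hdiv : (K - lam) / D = n)

include hK hD hlam hm hq hKn hn2 hdiv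

lemma single_pair (v : ℕ) (hv1 : 1 ≤ v) (hv2 : v + D ≤ K - lam) :
    eSum K m v + eSum K m (v + D) ∈ codeClassii K D lam m := by
  have hKl : D * n = K - lam := by omega
  have h2D : D * 2 ≤ D * n := Nat.mul_le_mul (le_refl D) hn2
  have hDlam : D + lam ≤ K := by omega
  have h2DKl : D + D ≤ K - lam := by omega
  clear hq hKn
  obtain ⟨i0, j0, hij, hi0⟩ : ∃ i0 j0, v - 1 = i0 + j0 * D ∧ i0 < D :=
    ⟨(v-1) % D, (v-1)/D, by rw [Nat.mod_add_div']; , Nat.mod_lt _ hD⟩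
  have p1 : (j0+1) * D = j0 * D + D := by ring
  have p2 : (j0+1-1) * D = j0 * D := by norm_num
  have hjlt : j0 * D < (n-1) * D := by
    have h5 : (n-1) * D = D * n - D := by rw [Nat.sub_mul, one_mul, Nat.mul_comm]
    omega
  have hjn : j0 < n - 1 := lt_of_mul_lt_mul_right hjlt (Nat.zero_le D)
  have g1 : 1 ≤ i0 + 1 := by omega
  have g2 : i0 + 1 ≤ D := by omega
  have g3 : 1 ≤ j0 + 1 := by omega
  have g4 : j0 + 1 ≤ (K - lam) / D - 1 := by rw [hdiv]; omega
  have g5 : i0 + 1 + (j0+1-1) * D = v := by omega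
  have g6 : i0 + 1 + (j0+1) * D = v + D := by omega
  exact Or.inl ⟨i0 + 1, j0 + 1, g1, g2, g3, g4, by rw [g5, g6]⟩

lemma pair_mem (v u : ℕ) (hv1 : 1 ≤ v) (hu : 1 ≤ u) (h2 : v + u * D ≤ K - lam) :
    eSum K m v + eSum K m (v + u * D) ∈
      Submodule.span (ZMod 2) (codeClassii K D lam m) := by
  induction u with
  | zero => omega
  | succ u ih =>
    have hexp : (u+1) * D = u * D + D := by ring
    rcases Nat.eq_or_lt_of_le hu with h | h
    · have h1 : v + 1 * D = v + D := by ring_nf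
      rw [← h, h1]
      exact Submodule.subset_span
        (single_pair K D lam m n q hK hD hlam hm hq hKn hn2 hdiv v hv1 (by omega))
    · have hu1 : 1 ≤ u := by omega
      have e1 := ih hu1 (by omega)
      have e2 : eSum K m (v + u * D) + eSum K m (v + u * D + D) ∈ codeClassii K D lam m :=
        single_pair K D lam m n q hK hD hlam hm hq hKn hn2 hdiv (v + u*D) (by omega)
          (by omega)
      have key : eSum K m v + eSum K m (v + (u+1) * D)
          = (eSum K m v + eSum K m (v + u * D))
            + (eSum K m (v + u * D) + eSum K m (v + u * D + D)) := by
        rw [char2_trick, show v + (u+1) * D = v + u * D + D by omega]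
      rw [key]
      exact Submodule.add_mem _ e1 (Submodule.subset_span e2)

lemma G_mem (v : ℕ) (hv1 : K - D - lam < v) (hv2 : v ≤ K) :
    ∑ t ∈ Finset.range (D / lam + 1), eSum K m (v + t * lam) ∈
      Submodule.span (ZMod 2) (codeClassii K D lam m) := by
  have hqd : D / lam = q := by rw [hq, Nat.mul_div_cancel _ hlam]
  have hql : q * lam = D := hq.symm
  have hKl : D * n = K - lam := by omega
  have h2D : D * 2 ≤ D * n := Nat.mul_le_mul (le_refl D) hn2
  have hDlam : D + lam ≤ K := by omega
  have h2DKl : D + D ≤ K - lam := by omega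
  have hpair : ∀ w, 1 ≤ w → w ≤ D →
      eSum K m w + eSum K m (w + (n-1) * D) ∈
        Submodule.span (ZMod 2) (codeClassii K D lam m) := by
    intro w hw1 hw2
    refine pair_mem K D lam m n q hK hD hlam hm hq hKn hn2 hdiv w (n-1) hw1 (by omega) ?_
    have hsub : (n-1) * D = D * n - D := by rw [Nat.sub_mul, one_mul, Nat.mul_comm]
    omega
  have hsub : (n-1) * D = D * n - D := by rw [Nat.sub_mul, one_mul, Nat.mul_comm]
  clear hq hKn
  induction v using Nat.strong_induction_on with
  | _ v IH =>
  by_cases hcase : v ≤ K - D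
  · -- base: equals a type-B codeword with r = v - (K - D - lam)
    set r := v - (K - D - lam) with hr
    have hr1 : 1 ≤ r := by omega
    have hr2 : r ≤ lam := by omega
    have hEq : ∑ t ∈ Finset.range (D / lam + 1), eSum K m (K - lam + r - t * lam)
        = ∑ t ∈ Finset.range (D / lam + 1), eSum K m (v + t * lam) := by
      rw [← Finset.sum_range_reflect]
      refine Finset.sum_congr rfl fun t ht => ?_
      have ht' : t ≤ q := by
        simp only [Finset.mem_range, hqd] at ht; omega
      have htl : t * lam ≤ D := by
        calc t * lam ≤ q * lam := Nat.mul_le_mul_right _ ht'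
          _ = D := hql
      have e1 : D/lam + 1 - 1 - t = q - t := by rw [hqd]; omega
      have e2 : (q - t) * lam = D - t * lam := by
        rw [Nat.sub_mul, hql]
      have htlX : ∀ X : ℕ, X ≤ D → K - lam + r - (D - X) = v + X := by
        intro X hX
        omega
      rw [e1, e2]
      exact congrArg (eSum K m) (htlX _ htl)
    rw [← hEq]
    exact Submodule.subset_span (Or.inr ⟨r, hr1, hr2, rfl⟩)
  · -- step: v > K - D
    have hvK : K - D < v := by omega
    have hlamv : lam < v := by omega
    have hterm : ∀ t : ℕ, v - lam + (t+1) * lam = v + t * lam := by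
      intro t
      have h5 : (t+1) * lam = t * lam + lam := by ring
      omega
    have hA : ∑ t ∈ Finset.range (D/lam + 1), eSum K m (v - lam + t * lam)
        = (∑ t ∈ Finset.range (D/lam), eSum K m (v + t * lam)) + eSum K m (v - lam) := by
      rw [Finset.sum_range_succ']
      congr 1
      · exact Finset.sum_congr rfl fun t _ => by rw [hterm t]
      · have h0 : v - lam + 0 * lam = v - lam := by omega
        rw [h0]
    have hB : ∑ t ∈ Finset.range (D/lam + 1), eSum K m (v + t * lam)
        = (∑ t ∈ Finset.range (D/lam), eSum K m (v + t * lam)) + eSum K m (v + D - K) := by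
      rw [Finset.sum_range_succ]
      congr 1
      rw [show D/lam * lam = D by rw [hqd]; exact hql]
      apply eSum_eq_of_mod
      have hh : K ≤ v + D := by omega
      rw [← Nat.mod_eq_sub_mod hh]
    have hGstep : ∑ t ∈ Finset.range (D / lam + 1), eSum K m (v + t * lam)
        = (∑ t ∈ Finset.range (D/lam + 1), eSum K m (v - lam + t * lam))
          + (eSum K m (v - lam) + eSum K m (v + D - K)) := by
      rw [hB, hA]
      rw [show (∑ t ∈ Finset.range (D/lam), eSum K m (v + t * lam)) + eSum K m (v - lam)
            + (eSum K m (v - lam) + eSum K m (v + D - K))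
          = (∑ t ∈ Finset.range (D/lam), eSum K m (v + t * lam)) + eSum K m (v + D - K)
            + (eSum K m (v - lam) + eSum K m (v - lam)) from by abel]
      rw [self_add_self, add_zero]
    rw [hGstep]
    refine Submodule.add_mem _ (IH (v - lam) (by omega) (by omega) (by omega)) ?_
    have hp := hpair (v + D - K) (by omega) (by omega)
    have hidx : v + D - K + (n-1) * D = v - lam := by omega
    rw [hidx] at hp
    have hcomm : eSum K m (v - lam) + eSum K m (v + D - K)
        = eSum K m (v + D - K) + eSum K m (v - lam) := by abel
    rw [hcomm]
    exact hp

end core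

section validity
variable (K D lam m n q : ℕ) (hK : 0 < K) (hD : 0 < D) (hlam : 0 < lam) (hm : 0 < m)
  (hq : D = q * lam) (hKn : K = D * n + lam) (hn2 : 2 ≤ n) (hdiv : (K - lam) / D = n)

include hK hD hlam hm hq hKn hn2 hdiv

lemma valid_code : IsIndexCode (m * K) (classiiA K D lam m) (codeClassii K D lam m) := by
  haveI : NeZero (m * K) := NeZero.of_pos (Nat.mul_pos hm hK)
  have hKl : D * n = K - lam := by omega
  have h2D : D * 2 ≤ D * n := Nat.mul_le_mul (le_refl D) hn2
  have hDlam : D + lam ≤ K := by omega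
  have h2DKl : D + D ≤ K - lam := by omega
  refine ⟨Set.toFinite _, fun k => ?_⟩
  set S := codeClassii K D lam m ∪ stdVec (m*K) '' classiiA K D lam m k with hS
  set Sp := Submodule.span (ZMod 2) S with hSp
  have hspan_code : Submodule.span (ZMod 2) (codeClassii K D lam m) ≤ Sp :=
    Submodule.span_mono Set.subset_union_left
  set v := resIdx (m*K) K k with hvdef
  have hv1 : 1 ≤ v := resIdx_pos _ _ hK _
  have hv2 : v ≤ K := resIdx_le _ _ hK _
  have hvmod : v % K = k.val % K := resIdx_mod _ _ _
  have hshift : ∀ c : ℕ, eSum K m (v + c)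
      = ∑ i ∈ Finset.range m, stdVec (m*K) (k + ((c + i * K : ℕ) : ZMod (m*K))) := by
    intro c
    rw [eSum_eq_of_mod K m (v + c) (k.val + c) (Nat.ModEq.add_right c hvmod)]
    exact eSum_val_add K m k c
  have hrange : Finset.range m = insert 0 (Finset.Ico 1 m) := by
    ext x; simp only [Finset.mem_range, Finset.mem_Ico, Finset.mem_insert]; omega
  have h0notin : (0 : ℕ) ∉ Finset.Ico 1 m := by simp
  have hsum0 : eSum K m v = stdVec (m*K) k
      + ∑ i ∈ Finset.Ico 1 m, stdVec (m*K) (k + ((0 + i * K : ℕ) : ZMod (m*K))) := by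
    have h0 := hshift 0
    rw [Nat.add_zero] at h0
    rw [h0, hrange, Finset.sum_insert h0notin]
    congr 2
    push_cast
    simp
  have hTmem : ∑ i ∈ Finset.Ico 1 m, stdVec (m*K) (k + ((0 + i * K : ℕ) : ZMod (m*K))) ∈ Sp := by
    refine Submodule.sum_mem _ fun i hi => ?_
    simp only [Finset.mem_Ico] at hi
    refine Submodule.subset_span (Or.inr ⟨k + ((0 + i * K : ℕ) : ZMod (m*K)), ?_, rfl⟩)
    have hx : (0 + i * K : ℕ) = (i * K : ℕ) := by omega
    rw [hx]
    unfold classiiA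
    split
    · exact Or.inl ⟨i, by omega, by omega, rfl⟩
    · exact Or.inl ⟨i, by omega, by omega, rfl⟩
  have hkey : stdVec (m*K) k = eSum K m v
      + ∑ i ∈ Finset.Ico 1 m, stdVec (m*K) (k + ((0 + i * K : ℕ) : ZMod (m*K))) := by
    rw [hsum0, add_assoc, self_add_self, add_zero]
  rw [hkey]
  refine Submodule.add_mem _ ?_ hTmem
  -- remains: eSum K m v ∈ Sp
  by_cases hcase : resIdx (m*K) K k ≤ K - D - lam
  · -- Class (ii) case 1
    have hvle : v ≤ K - D - lam := hcase
    have hant2 : eSum K m (v + D) ∈ Sp := by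
      rw [hshift D]
      refine Submodule.sum_mem _ fun i hi => ?_
      simp only [Finset.mem_range] at hi
      refine Submodule.subset_span (Or.inr ⟨k + ((D + i * K : ℕ) : ZMod (m*K)), ?_, rfl⟩)
      unfold classiiA
      rw [if_pos hcase]
      exact Or.inr ⟨i, by omega, rfl⟩
    have hpairv := single_pair K D lam m n q hK hD hlam hm hq hKn hn2 hdiv v hv1 (by omega)
    have hrw : eSum K m v = (eSum K m v + eSum K m (v + D)) + eSum K m (v + D) := by
      rw [add_assoc, self_add_self, add_zero]
    rw [hrw]
    exact Submodule.add_mem _ (hspan_code (Submodule.subset_span hpairv)) hant2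
  · -- Class (ii) case 2
    have hvgt : K - D - lam < v := by omega
    have hant2 : ∀ j : ℕ, 1 ≤ j → j ≤ D / lam → eSum K m (v + j * lam) ∈ Sp := by
      intro j hj1 hj2
      rw [hshift (j * lam)]
      refine Submodule.sum_mem _ fun i hi => ?_
      simp only [Finset.mem_range] at hi
      refine Submodule.subset_span (Or.inr ⟨k + ((j * lam + i * K : ℕ) : ZMod (m*K)), ?_, rfl⟩)
      unfold classiiA
      rw [if_neg hcase]
      exact Or.inr ⟨j, i, hj1, hj2, by omega, rfl⟩
    have hG := G_mem K D lam m n q hK hD hlam hm hq hKn hn2 hdiv v hvgt hv2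
    have hrange2' : ∀ Q : ℕ, Finset.range (Q + 1) = insert 0 (Finset.Ico 1 (Q + 1)) := by
      intro Q
      ext x; simp only [Finset.mem_range, Finset.mem_Ico, Finset.mem_insert]; omega
    have hrange2 : Finset.range (D/lam + 1) = insert 0 (Finset.Ico 1 (D/lam + 1)) :=
      hrange2' _
    have h0notin2 : (0 : ℕ) ∉ Finset.Ico 1 (D/lam + 1) := by simp
    have hsplit : ∑ t ∈ Finset.range (D/lam + 1), eSum K m (v + t * lam)
        = eSum K m v + ∑ t ∈ Finset.Ico 1 (D/lam + 1), eSum K m (v + t * lam) := by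
      rw [hrange2, Finset.sum_insert h0notin2]
      congr 1
      exact congrArg (eSum K m) (by omega)
    have hrw : eSum K m v = (∑ t ∈ Finset.range (D/lam + 1), eSum K m (v + t * lam))
        + ∑ t ∈ Finset.Ico 1 (D/lam + 1), eSum K m (v + t * lam) := by
      rw [hsplit, add_assoc, self_add_self, add_zero]
    rw [hrw]
    refine Submodule.add_mem _ (hspan_code hG) (Submodule.sum_mem _ fun t ht => ?_)
    simp only [Finset.mem_Ico] at ht
    exact hant2 t (by omega) (by omega)

end validity

section lower

lemma lower_bound (K D lam m : ℕ) (hK : 0 < K) (hD : 0 < D) (hlam : 0 < lam) (hm : 0 < m)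
    (C' : Set (ZMod (m*K) → ZMod 2))
    (hC' : IsIndexCode (m*K) (classiiA K D lam m) C') : K - D ≤ C'.ncard := by
  classical
  haveI : NeZero (m * K) := NeZero.of_pos (Nat.mul_pos hm hK)
  have hKmK : K ≤ m * K := Nat.le_mul_of_pos_left K hm
  have hm1K : (m - 1) * K + K = m * K := by
    rw [← Nat.add_one_mul]
    congr 1
    omega
  set B : Set (ZMod (m*K)) := {x | 1 ≤ x.val ∧ x.val ≤ K - D} with hB
  set E : Set (ZMod (m*K) → ZMod 2) := stdVec (m*K) '' Bᶜ with hE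
  set Sp := Submodule.span (ZMod 2) (C' ∪ E) with hSp
  have core : ∀ x : ZMod (m*K),
      (∀ y : ZMod (m*K), x.val < y.val → y.val ≤ K - D → 1 ≤ y.val → stdVec (m*K) y ∈ Sp) →
      stdVec (m*K) x ∈ Sp := by
    intro x hIH
    by_cases hxB : x ∈ B
    case neg => exact Submodule.subset_span (Or.inr ⟨x, hxB, rfl⟩)
    case pos =>
    obtain ⟨hx1, hx2⟩ : 1 ≤ x.val ∧ x.val ≤ K - D := hxB
    have hx0 : x.val < m * K := ZMod.val_lt x
    have hcast : ∀ c : ℕ, x + (c : ZMod (m*K)) = ((x.val + c : ℕ) : ZMod (m*K)) := by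
      intro c; rw [Nat.cast_add, ZMod.natCast_val, ZMod.cast_id]
    have hval : ∀ c : ℕ, (x + (c : ZMod (m*K))).val = (x.val + c) % (m*K) := by
      intro c; rw [hcast c, ZMod.val_natCast]
    have hout : ∀ c : ℕ, K - D < x.val + c → x.val + c ≤ m * K →
        stdVec (m*K) (x + (c : ZMod (m*K))) ∈ Sp := by
      intro c h1 h2
      refine Submodule.subset_span (Or.inr ⟨_, ?_, rfl⟩)
      intro hmem
      obtain ⟨hm1, hm2⟩ : 1 ≤ (x + (c : ZMod (m*K))).val ∧ (x + (c : ZMod (m*K))).val ≤ K - D := hmem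
      rw [hval c] at hm1 hm2
      rcases eq_or_lt_of_le h2 with he | hl
      · rw [he, Nat.mod_self] at hm1; omega
      · rw [Nat.mod_eq_of_lt hl] at hm2; omega
    have hin : ∀ c : ℕ, 1 ≤ c → x.val + c ≤ K - D →
        stdVec (m*K) (x + (c : ZMod (m*K))) ∈ Sp := by
      intro c h1 h2
      have hlt : x.val + c < m * K := by omega
      have hv : (x + (c : ZMod (m*K))).val = x.val + c := by
        rw [hval c, Nat.mod_eq_of_lt hlt]
      exact hIH _ (by rw [hv]; omega) (by rw [hv]; omega) (by rw [hv]; omega)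
    have hx' := hC'.2 x
    have hle : Submodule.span (ZMod 2) (C' ∪ stdVec (m*K) '' classiiA K D lam m x) ≤ Sp := by
      rw [Submodule.span_le]
      refine Set.union_subset (fun c hc => Submodule.subset_span (Or.inl hc)) ?_
      rintro w ⟨a, ha, rfl⟩
      have hres : resIdx (m*K) K x = x.val := by
        unfold resIdx
        rw [Nat.mod_eq_of_lt (show x.val < K by omega), if_neg (by omega)]
      have hiKbound : ∀ i : ℕ, i ≤ m - 1 → i * K ≤ (m-1) * K :=
        fun i hi => Nat.mul_le_mul_right _ hi
      have hfirst : ∀ i : ℕ, 1 ≤ i → i ≤ m - 1 →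
          stdVec (m*K) (x + ((i * K : ℕ) : ZMod (m*K))) ∈ Sp := by
        intro i h1 h2
        have hKi : K ≤ i * K := Nat.le_mul_of_pos_left K (by omega)
        have := hiKbound i h2
        exact hout (i * K) (by omega) (by omega)
      unfold classiiA at ha
      split at ha
      · next hcnd =>
        rw [hres] at hcnd
        rcases ha with ⟨i, h1, h2, rfl⟩ | ⟨i, h2, rfl⟩
        · exact hfirst i h1 h2
        · have := hiKbound i h2
          by_cases hc : x.val + (D + i * K) ≤ K - D
          · exact hin _ (by omega) hc
          · exact hout _ (by omega) (by omega)
      · next hcnd =>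
        rcases ha with ⟨i, h1, h2, rfl⟩ | ⟨j, i, hj1, hj2, h2, rfl⟩
        · exact hfirst i h1 h2
        · have := hiKbound i h2
          have hjl : j * lam ≤ D :=
            le_trans (Nat.mul_le_mul_right _ hj2) (Nat.div_mul_le_self D lam)
          have hjl1 : 1 ≤ j * lam := Nat.mul_pos (by omega) hlam
          by_cases hc : x.val + (j * lam + i * K) ≤ K - D
          · exact hin _ (by omega) hc
          · exact hout _ (by omega) (by omega)
    exact hle hx'
  have main : ∀ t : ℕ, ∀ x : ZMod (m*K), K - D ≤ x.val + t → stdVec (m*K) x ∈ Sp := by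
    intro t
    induction t with
    | zero =>
      intro x hx
      refine core x fun y hy1 hy2 _ => absurd hy2 (by omega)
    | succ t IH =>
      intro x hx
      exact core x fun y hy1 hy2 hy3 => IH y (by omega)
  have hall : ∀ x : ZMod (m*K), stdVec (m*K) x ∈ Sp :=
    fun x => main (K - D) x (by omega)
  have hspan_top : Sp = ⊤ := by
    rw [eq_top_iff]
    intro w _
    have hsingle : ∀ x : ZMod (m*K), (w x) • stdVec (m*K) x = Pi.single x (w x) := by
      intro x; funext y
      by_cases h : y = x <;> simp [stdVec, Pi.single_apply, h]
    have hw : w = ∑ x : ZMod (m*K), (w x) • stdVec (m*K) x := by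
      conv_lhs => rw [← Finset.univ_sum_single w]
      exact Finset.sum_congr rfl fun x _ => (hsingle x).symm
    rw [hw]
    exact Submodule.sum_mem _ fun x _ => Submodule.smul_mem _ _ (hall x)
  haveI : Fintype ↑(C' ∪ E) := (hC'.1.union (Set.toFinite E)).fintype
  have h3 : Module.finrank (ZMod 2) (ZMod (m*K) → ZMod 2) ≤ (C' ∪ E).toFinset.card := by
    rw [← finrank_top (ZMod 2) (ZMod (m*K) → ZMod 2)]
    rw [show (⊤ : Submodule (ZMod 2) (ZMod (m*K) → ZMod 2))
        = Submodule.span (ZMod 2) (C' ∪ E) from hspan_top.symm]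
    exact finrank_span_le_card _
  have hfr : Module.finrank (ZMod 2) (ZMod (m*K) → ZMod 2) = m * K := by
    rw [Module.finrank_pi]
    exact ZMod.card _
  have hcardeq : (C' ∪ E).toFinset.card = (C' ∪ E).ncard :=
    (Set.ncard_eq_toFinset_card' _).symm
  have hBcard : B.ncard = K - D := by
    have hBim : B = (fun l : ℕ => ((l : ZMod (m*K)))) '' (Set.Icc 1 (K-D)) := by
      ext x
      simp only [Set.mem_image, Set.mem_Icc, hB, Set.mem_setOf_eq]
      constructor
      · rintro ⟨h1, h2⟩
        exact ⟨x.val, ⟨h1, h2⟩, by rw [ZMod.natCast_val, ZMod.cast_id]⟩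
      · rintro ⟨l, ⟨h1, h2⟩, rfl⟩
        rw [ZMod.val_natCast, Nat.mod_eq_of_lt (by omega)]
        exact ⟨h1, h2⟩
    rw [hBim, Set.ncard_image_of_injOn, ← Finset.coe_Icc, Set.ncard_coe_finset, Nat.card_Icc]
    · omega
    · intro a ha b hb hab
      simp only [Set.mem_Icc] at ha hb
      have := congrArg ZMod.val hab
      rwa [ZMod.val_natCast, ZMod.val_natCast, Nat.mod_eq_of_lt (by omega),
        Nat.mod_eq_of_lt (by omega)] at this
  have hcompl := Set.ncard_add_ncard_compl B
  rw [Nat.card_zmod] at hcompl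
  have hEcard : E.ncard ≤ Bᶜ.ncard := by
    rw [hE]; exact Set.ncard_image_le (Set.toFinite _)
  have hunion := Set.ncard_union_le C' E
  omega

end lower

lemma code_card_le (K D lam m n q : ℕ) (hK : 0 < K) (hD : 0 < D) (hlam : 0 < lam)
    (hm : 0 < m) (hq : D = q * lam) (hKn : K = D * n + lam) (hn2 : 2 ≤ n)
    (hdiv : (K - lam) / D = n) :
    (codeClassii K D lam m).ncard ≤ K - D := by
  classical
  haveI : NeZero (m * K) := NeZero.of_pos (Nat.mul_pos hm hK)
  set F : Finset (ZMod (m*K) → ZMod 2) :=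
    ((Finset.Icc 1 D ×ˢ Finset.Icc 1 ((K - lam)/D - 1)).image
      fun p => eSum K m (p.1 + (p.2 - 1) * D) + eSum K m (p.1 + p.2 * D)) ∪
    ((Finset.Icc 1 lam).image
      fun r => ∑ t ∈ Finset.range (D/lam + 1), eSum K m (K - lam + r - t * lam)) with hF
  have hsub : codeClassii K D lam m ⊆ ↑F := by
    rintro w (⟨i, j, h1, h2, h3, h4, rfl⟩ | ⟨r, h1, h2, rfl⟩)
    · refine Finset.mem_coe.mpr (Finset.mem_union_left _ (Finset.mem_image.mpr ?_))
      exact ⟨(i, j), Finset.mem_product.mpr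
        ⟨Finset.mem_Icc.mpr ⟨h1, h2⟩, Finset.mem_Icc.mpr ⟨h3, h4⟩⟩, rfl⟩
    · refine Finset.mem_coe.mpr (Finset.mem_union_right _ (Finset.mem_image.mpr ?_))
      exact ⟨r, Finset.mem_Icc.mpr ⟨h1, h2⟩, rfl⟩
  have h1 : (codeClassii K D lam m).ncard ≤ F.card := by
    have := Set.ncard_le_ncard hsub F.finite_toSet
    rwa [Set.ncard_coe_finset] at this
  have h2 : F.card ≤ D * ((K - lam)/D - 1) + lam := by
    refine le_trans (Finset.card_union_le _ _) (add_le_add ?_ ?_)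
    · refine le_trans (Finset.card_image_le) ?_
      rw [Finset.card_product, Nat.card_Icc, Nat.card_Icc]
      simp
    · refine le_trans (Finset.card_image_le) ?_
      rw [Nat.card_Icc]
      omega
  have h3 : D * ((K - lam)/D - 1) + lam = K - D := by
    rw [hdiv]
    have hmul : D * (n - 1) + D = D * n := by
      rw [← Nat.mul_succ]
      congr 1
      omega
    omega
  omega


/-- **Class (ii) lifted (Corollary 5).** For `λ ∣ D`, `D ∣ K - λ` and
`n = (K - λ)/D > 1`, the lifted code is a valid scalar linear index code of optimal
length `K - D` for the lifted Class (ii) problem on `m*K` messages. -/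
theorem lifted_code_class_ii (K D lam m : ℕ) (hK : 0 < K) (hD : 0 < D) (hlam : 0 < lam)
    (hm : 0 < m) (hdvd1 : lam ∣ D) (hdvd2 : D ∣ (K - lam)) (hn : 1 < (K - lam) / D) :
    (IsIndexCode (m * K) (classiiA K D lam m) (codeClassii K D lam m) ∧
      (codeClassii K D lam m).ncard = K - D) ∧
    (∀ C' : Set (ZMod (m * K) → ZMod 2),
      IsIndexCode (m * K) (classiiA K D lam m) C' → K - D ≤ C'.ncard) := by
  obtain ⟨n, hn'⟩ := hdvd2
  obtain ⟨q, hq'⟩ := hdvd1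
  have hq : D = q * lam := by rw [hq', Nat.mul_comm]
  have hdiv : (K - lam) / D = n := by rw [hn', Nat.mul_div_cancel_left _ hD]
  have hn2 : 2 ≤ n := by rw [hdiv] at hn; omega
  have hpos : 0 < D * n := Nat.mul_pos hD (by omega)
  have hlamK : lam < K := by omega
  have hKn : K = D * n + lam := by omega
  have hvalid := valid_code K D lam m n q hK hD hlam hm hq hKn hn2 hdiv
  have hlower := fun C' hC' => lower_bound K D lam m hK hD hlam hm C' hC'
  refine ⟨⟨hvalid, le_antisymm
    (code_card_le K D lam m n q hK hD hlam hm hq hKn hn2 hdiv)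
    (hlower _ hvalid)⟩, hlower⟩
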